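/- Let φ: [0,1] → ℝ satisfy the functional equation φ(z) = φ(zp + (1-p))·g(z) for all z ∈ [0,1], where 0 < p < 1, g is continuous with g(1) = 1, and φ is continuous with φ(1) = 1. Then φ(z) = Π_{k=0}^∞ g(1 - (1-z)p^k), with the infinite product converging whenever g is the Laplace-type transform g(z) = E[exp(-Λ r (1-z))] for a non-negative integrable random variable Λ and r > 0. -/
import Mathlib


open MeasureTheory Real Filter Topology

/-- iteration of the functional equation
`φ(z) = φ(zp + (1-p))·g(z)` yields the infinite product representation
`φ(z) = Π_{k≥0} g(1 - (1-z)p^k)`, where `g` is the Laplace-type transform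
`g(z) = E[exp(-Λ r (1-z))]` of a non-negative integrable random variable `Λ`
(with law `ν`) and `r > 0`. -/
theorem pgf_infinite_product
    (ν : Measure ℝ) [IsProbabilityMeasure ν] (hnn : ∀ᵐ x ∂ν, 0 ≤ x)
    (hint : Integrable (fun x => x) ν)
    (r p : ℝ) (hr : 0 < r) (hp0 : 0 < p) (hp1 : p < 1)
    (φ g : ℝ → ℝ)
    (hg : ∀ z, g z = ∫ x, Real.exp (-(x * r * (1 - z))) ∂ν)
    (hφcont : ContinuousOn φ (Set.Icc 0 1)) (hφ1 : φ 1 = 1)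
    (hfe : ∀ z ∈ Set.Icc (0 : ℝ) 1, φ z = φ (z * p + (1 - p)) * g z) :
    ∀ z ∈ Set.Icc (0 : ℝ) 1,
      Multipliable (fun k : ℕ => g (1 - (1 - z) * p ^ k)) ∧
      φ z = ∏' k : ℕ, g (1 - (1 - z) * p ^ k) := by
  -- integrability of the integrand
  have hInt : ∀ t : ℝ, 0 ≤ t → Integrable (fun x => Real.exp (-(x * r * t))) ν := by
    intro t ht
    apply Integrable.mono' (integrable_const 1)
      (Continuous.aestronglyMeasurable (by fun_prop))
    filter_upwards [hnn] with x hx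
    rw [Real.norm_eq_abs, abs_of_nonneg (Real.exp_pos _).le]
    apply Real.exp_le_one_iff.mpr
    have : 0 ≤ x * r * t := mul_nonneg (mul_nonneg hx hr.le) ht
    linarith
  set M : ℝ := ∫ x, x ∂ν with hM
  clear_value M
  have hM0 : 0 ≤ M := hM ▸ integral_nonneg_of_ae hnn
  -- g is positive, ≤ 1, and ≥ 1 - r(1-w)M for w ≤ 1
  have hgpos : ∀ w : ℝ, w ≤ 1 → 0 < g w := by
    intro w hw
    rw [hg]
    rw [integral_pos_iff_support_of_nonneg_ae
      (Eventually.of_forall fun x => (Real.exp_pos _).le) (hInt _ (by linarith))]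
    have : (Function.support fun x => Real.exp (-(x * r * (1 - w)))) = Set.univ := by
      ext x; simp [Function.support, (Real.exp_pos _).ne']
    rw [this]
    simp
  have hgle : ∀ w : ℝ, w ≤ 1 → g w ≤ 1 := by
    intro w hw
    rw [hg]
    calc ∫ x, Real.exp (-(x * r * (1 - w))) ∂ν ≤ ∫ _, (1:ℝ) ∂ν := by
          apply integral_mono_ae (hInt _ (by linarith)) (integrable_const 1)
          filter_upwards [hnn] with x hx
          apply Real.exp_le_one_iff.mpr
          have : 0 ≤ x * r * (1 - w) := mul_nonneg (mul_nonneg hx hr.le) (by linarith)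
          linarith
      _ = 1 := by simp
  have hgge : ∀ w : ℝ, w ≤ 1 → 1 - r * (1 - w) * M ≤ g w := by
    intro w hw
    rw [hg]
    have h1 : ∫ x, (1 - x * (r * (1 - w))) ∂ν = 1 - r * (1 - w) * M := by
      rw [integral_sub (integrable_const 1) (hint.mul_const _)]
      rw [integral_mul_const]
      simp [hM]; ring
    calc 1 - r * (1 - w) * M = ∫ x, (1 - x * (r * (1 - w))) ∂ν := h1.symm
      _ ≤ ∫ x, Real.exp (-(x * r * (1 - w))) ∂ν := by
          apply integral_mono_ae ((integrable_const 1).sub (hint.mul_const _))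
            (hInt _ (by linarith))
          filter_upwards with x
          simp only [Pi.sub_apply]
          have := Real.add_one_le_exp (-(x * r * (1 - w)))
          nlinarith
  intro z hz
  obtain ⟨hz0, hz1⟩ := hz
  set s : ℝ := 1 - z with hs
  clear_value s
  have hs0 : 0 ≤ s := by simp [hs]; linarith
  have hs1 : s ≤ 1 := by simp [hs]; linarith
  set w : ℕ → ℝ := fun k => 1 - s * p ^ k with hw
  clear_value w
  have hpk : ∀ k : ℕ, 0 < p ^ k ∧ p ^ k ≤ 1 := fun k =>
    ⟨pow_pos hp0 k, pow_le_one₀ hp0.le hp1.le⟩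
  have hwmem : ∀ k, w k ∈ Set.Icc (0:ℝ) 1 := by
    intro k
    obtain ⟨h1, h2⟩ := hpk k
    constructor
    · simp only [hw]; nlinarith
    · simp only [hw]; nlinarith
  have hwle : ∀ k, w k ≤ 1 := fun k => (hwmem k).2
  -- induction identity
  have hiter : ∀ n : ℕ, φ z = φ (w n) * ∏ k ∈ Finset.range n, g (w k) := by
    intro n
    induction n with
    | zero => simp [hw, hs]
    | succ n ih =>
      have hstep := hfe (w n) (hwmem n)
      have harg : w n * p + (1 - p) = w (n + 1) := by
        simp only [hw]; ring
      rw [harg] at hstep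
      rw [ih, hstep, Finset.prod_range_succ]; ring
  -- φ (w n) → 1
  have hwlim : Tendsto w atTop (𝓝 1) := by
    have h1 : Tendsto (fun n : ℕ => s * p ^ n) atTop (𝓝 0) := by
      simpa using (tendsto_pow_atTop_nhds_zero_of_lt_one hp0.le hp1).const_mul s
    have h2 := h1.const_sub 1
    rw [hw]
    simpa using h2
  have hφwlim : Tendsto (fun n => φ (w n)) atTop (𝓝 1) := by
    have hct : Tendsto φ (𝓝[Set.Icc (0:ℝ) 1] 1) (𝓝 (φ 1)) :=
      hφcont 1 (by norm_num)
    rw [hφ1] at hct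
    exact hct.comp (tendsto_nhdsWithin_of_tendsto_nhds_of_eventually_within w hwlim
      (Eventually.of_forall hwmem))
  -- partial products → φ z
  have hPlim : Tendsto (fun n => ∏ k ∈ Finset.range n, g (w k)) atTop (𝓝 (φ z)) := by
    have hev : ∀ᶠ n in atTop, φ z / φ (w n) = ∏ k ∈ Finset.range n, g (w k) := by
      filter_upwards [hφwlim.eventually_ne one_ne_zero] with n h
      rw [hiter n, mul_comm, mul_div_assoc, div_self h, mul_one]
    have h3 : Tendsto (fun n => φ z / φ (w n)) atTop (𝓝 (φ z / 1)) :=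
      (tendsto_const_nhds).div hφwlim one_ne_zero
    rw [div_one] at h3
    exact h3.congr' hev
  -- summability of logs
  have hgwpos : ∀ k, 0 < g (w k) := fun k => hgpos _ (hwle k)
  have hsum : Summable (fun k => Real.log (g (w k))) := by
    rw [← summable_neg_iff]
    obtain ⟨N, hN⟩ : ∃ N : ℕ, r * s * M * p ^ N ≤ 1 / 2 := by
      have h := (tendsto_pow_atTop_nhds_zero_of_lt_one hp0.le hp1).const_mul (r * s * M)
      rw [mul_zero] at h
      exact (h.eventually_le_const (by norm_num : (0:ℝ) < 1/2)).exists
    rw [← summable_nat_add_iff N]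
    have hbound : ∀ k : ℕ, -Real.log (g (w (k + N))) ≤ 2 * (r * s * M) * p ^ (k + N) := by
      intro k
      have hge := hgge (w (k + N)) (hwle (k + N))
      have hwk : (1 : ℝ) - w (k + N) = s * p ^ (k + N) := by simp [hw]
      rw [hwk] at hge
      have hple : p ^ (k + N) ≤ p ^ N :=
        pow_le_pow_of_le_one hp0.le hp1.le (Nat.le_add_left N k)
      have hhalf : r * s * M * p ^ (k + N) ≤ 1 / 2 := by
        calc r * s * M * p ^ (k + N) ≤ r * s * M * p ^ N := by
              apply mul_le_mul_of_nonneg_left hple (by positivity)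
          _ ≤ 1 / 2 := hN
      have hg2 : (1:ℝ)/2 ≤ g (w (k + N)) := by
        have hre : r * (s * p ^ (k + N)) * M = r * s * M * p ^ (k + N) := by ring
        rw [hre] at hge; linarith
      have hgp := hgwpos (k + N)
      -- -log x ≤ (1-x)/x ≤ 2(1-x) for x ≥ 1/2
      have hlog : Real.log ((g (w (k + N)))⁻¹) ≤ (g (w (k + N)))⁻¹ - 1 :=
        Real.log_le_sub_one_of_pos (inv_pos.mpr hgp)
      rw [Real.log_inv] at hlog
      have hinv : (g (w (k + N)))⁻¹ ≤ 2 := by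
        rw [inv_le_comm₀ hgp (by norm_num)]
        linarith
      have h1g : 1 - g (w (k + N)) ≤ r * s * M * p ^ (k + N) := by
        have hre : r * (s * p ^ (k + N)) * M = r * s * M * p ^ (k + N) := by ring
        rw [hre] at hge; linarith
      have heq : (g (w (k + N)))⁻¹ - 1 = (1 - g (w (k + N))) * (g (w (k + N)))⁻¹ := by
        field_simp
      have hnn1 : 0 ≤ 1 - g (w (k + N)) := sub_nonneg.mpr (hgle _ (hwle (k + N)))
      have hkey : (1 - g (w (k + N))) * (g (w (k + N)))⁻¹ ≤ (1 - g (w (k + N))) * 2 :=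
        mul_le_mul_of_nonneg_left hinv hnn1
      linarith
    apply Summable.of_nonneg_of_le
      (fun k => by
        have := hgle (w (k + N)) (hwle (k + N))
        have := hgwpos (k + N)
        simp only [neg_nonneg]
        exact Real.log_nonpos (by linarith) (by linarith))
      hbound
    exact ((summable_geometric_of_lt_one hp0.le hp1).mul_left (2 * (r * s * M))).comp_injective
      (add_left_injective N)
  -- conclude
  obtain ⟨S, hS⟩ := hsum
  have hprod : HasProd (fun k => g (w k)) (Real.exp S) := by
    have := hS.rexp
    refine this.congr_fun fun k => ?_
    simp [Function.comp, Real.exp_log (hgwpos k)]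
  have hmult : Multipliable (fun k => g (w k)) := ⟨_, hprod⟩
  have hwk2 : ∀ k : ℕ, (1 - s * p ^ k) = w k := fun k => by rw [hw]
  simp only [hwk2]
  refine ⟨hmult, ?_⟩
  have h4 := hprod.tendsto_prod_nat
  have := tendsto_nhds_unique hPlim h4
  rw [this, hprod.tprod_eq]
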